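/- arXiv:1810.09588 — 2 statements merged into one kernel-verified Lean document; each statement's English description precedes it below -/
import Mathlib

section
/- Let w(y) = √2 · sech(y) and let λ ∈ ℝ with λ ≠ 3. Suppose ψ : ℝ → ℝ is twice continuously differentiable, ψ and ψ' are bounded and tend to 0 as |y| → ∞, and ψ satisfies (L₀ − λ)ψ = w³, i.e., ψ''(y) − ψ(y) + 3·w(y)²·ψ(y) − λ·ψ(y) = w(y)³ for all y. Then ∫_ℝ w(y)²·ψ(y) dy = (3π/√2)/(3 − λ). -/
open MeasureTheory Real Filter Topology

/-- The homoclinic solution of the core problem for `p = 3`: `w(y) = √2 sech(y)`. -/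
noncomputable def w3 (y : ℝ) : ℝ := Real.sqrt 2 / Real.cosh y

namespace W3Aux

lemma cosh_ne (y : ℝ) : Real.cosh y ≠ 0 := (Real.cosh_pos y).ne'

lemma sech_nonneg (y : ℝ) : 0 ≤ (Real.cosh y)⁻¹ := inv_nonneg.2 (Real.cosh_pos y).le

lemma sech_le_one (y : ℝ) : (Real.cosh y)⁻¹ ≤ 1 := inv_le_one_of_one_le₀ (Real.one_le_cosh y)

lemma abs_sinh_le (y : ℝ) : |Real.sinh y| ≤ Real.cosh y := by
  nlinarith [Real.cosh_sq y, Real.cosh_pos y, sq_abs (Real.sinh y), abs_nonneg (Real.sinh y)]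

lemma sech_le_two_exp (y : ℝ) : (Real.cosh y)⁻¹ ≤ 2 * Real.exp y := by
  have h1 : (2 * Real.exp y)⁻¹ ≤ Real.cosh y := by
    rw [Real.cosh_eq, mul_inv, ← Real.exp_neg]
    have := Real.exp_pos y; have := Real.exp_pos (-y); linarith
  calc (Real.cosh y)⁻¹ ≤ ((2 * Real.exp y)⁻¹)⁻¹ := inv_anti₀ (by positivity) h1
    _ = 2 * Real.exp y := inv_inv _

lemma sech_le_two_exp_neg (y : ℝ) : (Real.cosh y)⁻¹ ≤ 2 * Real.exp (-y) := by
  have h := sech_le_two_exp (-y)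
  rwa [Real.cosh_neg] at h

lemma continuous_sech : Continuous fun y : ℝ => (Real.cosh y)⁻¹ :=
  Real.continuous_cosh.inv₀ cosh_ne

lemma integrable_sech : Integrable (fun y : ℝ => (Real.cosh y)⁻¹) := by
  have hmeas : AEStronglyMeasurable (fun y : ℝ => (Real.cosh y)⁻¹) volume :=
    continuous_sech.aestronglyMeasurable
  rw [← integrableOn_univ, ← Set.Iic_union_Ioi (a := (0:ℝ))]
  apply IntegrableOn.union
  · refine Integrable.mono' ((integrableOn_exp_Iic 0).const_mul 2) hmeas.restrict
      (ae_of_all _ fun y => ?_)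
    rw [Real.norm_eq_abs, abs_of_nonneg (sech_nonneg y)]
    exact sech_le_two_exp y
  · refine Integrable.mono' ((exp_neg_integrableOn_Ioi 0 one_pos).const_mul 2) hmeas.restrict
      (ae_of_all _ fun y => ?_)
    rw [Real.norm_eq_abs, abs_of_nonneg (sech_nonneg y)]
    simpa [neg_one_mul] using sech_le_two_exp_neg y

lemma tendsto_sech_atTop : Tendsto (fun y : ℝ => (Real.cosh y)⁻¹) atTop (𝓝 0) := by
  have h : Tendsto (fun y : ℝ => 2 * Real.exp (-y)) atTop (𝓝 0) := by
    have : Tendsto (fun y : ℝ => Real.exp (-y)) atTop (𝓝 0) :=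
      Real.tendsto_exp_atBot.comp tendsto_neg_atTop_atBot
    simpa using this.const_mul 2
  refine squeeze_zero_norm (fun y => ?_) h
  rw [Real.norm_eq_abs, abs_of_nonneg (sech_nonneg y)]
  exact sech_le_two_exp_neg y

lemma tendsto_sech_atBot : Tendsto (fun y : ℝ => (Real.cosh y)⁻¹) atBot (𝓝 0) := by
  have h : Tendsto (fun y : ℝ => 2 * Real.exp y) atBot (𝓝 0) := by
    simpa using Real.tendsto_exp_atBot.const_mul 2
  refine squeeze_zero_norm (fun y => ?_) h
  rw [Real.norm_eq_abs, abs_of_nonneg (sech_nonneg y)]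
  exact sech_le_two_exp y

lemma tendsto_sinh_atTop : Tendsto Real.sinh atTop atTop :=
  tendsto_atTop_atTop_of_monotone Real.sinh_strictMono.monotone
    (fun b => (Real.sinh_surjective b).imp fun _ ha => ha.ge)

lemma tendsto_sinh_atBot : Tendsto Real.sinh atBot atBot :=
  tendsto_atBot_atBot_of_monotone Real.sinh_strictMono.monotone
    (fun b => (Real.sinh_surjective b).imp fun _ ha => ha.le)

lemma tendsto_arctan_sinh_atTop :
    Tendsto (fun y : ℝ => Real.arctan (Real.sinh y)) atTop (𝓝 (π/2)) :=
  (Real.tendsto_arctan_atTop.mono_right nhdsWithin_le_nhds).comp tendsto_sinh_atTop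

lemma tendsto_arctan_sinh_atBot :
    Tendsto (fun y : ℝ => Real.arctan (Real.sinh y)) atBot (𝓝 (-(π/2))) :=
  (Real.tendsto_arctan_atBot.mono_right nhdsWithin_le_nhds).comp tendsto_sinh_atBot

lemma hasDerivAt_sech (y : ℝ) :
    HasDerivAt (fun x => (Real.cosh x)⁻¹) (-Real.sinh y / Real.cosh y ^ 2) y :=
  (Real.hasDerivAt_cosh y).inv (cosh_ne y)

lemma hasDerivAt_arctan_sinh (y : ℝ) :
    HasDerivAt (fun x => Real.arctan (Real.sinh x)) ((Real.cosh y)⁻¹) y := by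
  have h := (Real.hasDerivAt_arctan (Real.sinh y)).comp y (Real.hasDerivAt_sinh y)
  refine h.congr_deriv (Eq.symm ?_)
  rw [add_comm, ← Real.cosh_sq y]
  rw [one_div, pow_two, mul_inv, mul_assoc, inv_mul_cancel₀ (cosh_ne y), mul_one]

/-- `w3 y ^ k` rewritten in terms of `sech`. -/
lemma w3_sq (y : ℝ) : w3 y ^ 2 = 2 * ((Real.cosh y)⁻¹) ^ 2 := by
  rw [w3, div_eq_mul_inv, mul_pow, Real.sq_sqrt (by norm_num : (0:ℝ) ≤ 2), inv_pow]

lemma sqrt_two_sq : Real.sqrt 2 ^ 2 = 2 := Real.sq_sqrt (by norm_num)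

lemma sech_pow_le (y : ℝ) (k : ℕ) : ((Real.cosh y)⁻¹) ^ (k+1) ≤ (Real.cosh y)⁻¹ := by
  calc ((Real.cosh y)⁻¹) ^ (k+1) ≤ ((Real.cosh y)⁻¹) ^ 1 :=
        pow_le_pow_of_le_one (sech_nonneg y) (sech_le_one y) (by omega)
    _ = (Real.cosh y)⁻¹ := pow_one _

lemma sinh_mul_sech_pow_le (y : ℝ) (k : ℕ) :
    |Real.sinh y * ((Real.cosh y)⁻¹) ^ (k+2)| ≤ (Real.cosh y)⁻¹ := by
  have h1 : |Real.sinh y * ((Real.cosh y)⁻¹) ^ (k+2)|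
      = |Real.sinh y| * ((Real.cosh y)⁻¹) ^ (k+2) := by
    rw [abs_mul, abs_of_nonneg (pow_nonneg (sech_nonneg y) _)]
  rw [h1, pow_succ']
  calc |Real.sinh y| * ((Real.cosh y)⁻¹ * ((Real.cosh y)⁻¹) ^ (k+1))
      ≤ Real.cosh y * ((Real.cosh y)⁻¹ * ((Real.cosh y)⁻¹) ^ (k+1)) := by
        apply mul_le_mul_of_nonneg_right (abs_sinh_le y)
        positivity
    _ = ((Real.cosh y)⁻¹) ^ (k+1) := by
        rw [← mul_assoc, mul_inv_cancel₀ (cosh_ne y), one_mul]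
    _ ≤ (Real.cosh y)⁻¹ := sech_pow_le y k

lemma tendsto_sinh_mul_sech_pow {l : Filter ℝ}
    (hl : Tendsto (fun y : ℝ => (Real.cosh y)⁻¹) l (𝓝 0)) (k : ℕ) :
    Tendsto (fun y : ℝ => Real.sinh y * ((Real.cosh y)⁻¹) ^ (k+2)) l (𝓝 0) :=
  squeeze_zero_norm (fun y => by
    rw [Real.norm_eq_abs]; exact sinh_mul_sech_pow_le y k) hl

lemma continuous_w3 : Continuous w3 :=
  continuous_const.div Real.continuous_cosh cosh_ne

/-- The antiderivative of `w3 ^ 5`. -/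
noncomputable def H5 (y : ℝ) : ℝ :=
  Real.sqrt 2 * (Real.sinh y * ((Real.cosh y)⁻¹) ^ 4
    + (3/2) * (Real.sinh y * ((Real.cosh y)⁻¹) ^ 2)
    + (3/2) * Real.arctan (Real.sinh y))

lemma hasDerivAt_H5 (y : ℝ) : HasDerivAt H5 (w3 y ^ 5) y := by
  have hs := Real.hasDerivAt_sinh y
  have hc := hasDerivAt_sech y
  have h4 := hc.pow 4
  have h2 := hc.pow 2
  have ha := hasDerivAt_arctan_sinh y
  have H := (((hs.mul h4).add ((hs.mul h2).const_mul (3/2))).add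
    (ha.const_mul (3/2))).const_mul (Real.sqrt 2)
  refine H.congr_deriv (Eq.symm ?_)
  have hcs : Real.sinh y ^ 2 = Real.cosh y ^ 2 - 1 := by
    have := Real.cosh_sq y; linarith
  have hne := cosh_ne y
  have h2' := sqrt_two_sq
  rw [w3]
  simp only [Pi.pow_apply]
  norm_num
  field_simp
  ring_nf
  linear_combination (8 + 6*Real.cosh y^2) * hcs + (2*(Real.sqrt 2^2+2)) * h2'

lemma w3_pow5_eq (y : ℝ) : w3 y ^ 5 = 4 * Real.sqrt 2 * ((Real.cosh y)⁻¹) ^ 5 := by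
  rw [w3, div_eq_mul_inv, mul_pow]
  have : Real.sqrt 2 ^ 5 = 4 * Real.sqrt 2 := by
    have h := sqrt_two_sq
    calc Real.sqrt 2 ^ 5 = (Real.sqrt 2 ^ 2) * (Real.sqrt 2 ^ 2) * Real.sqrt 2 := by ring
      _ = 4 * Real.sqrt 2 := by rw [h]; ring
  rw [this]

lemma integrable_w3_pow5 : Integrable (fun y : ℝ => w3 y ^ 5) := by
  refine (integrable_sech.const_mul (4 * Real.sqrt 2)).mono'
    ((continuous_w3.pow 5).aestronglyMeasurable) (ae_of_all _ fun y => ?_)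
  rw [w3_pow5_eq, Real.norm_eq_abs]
  have h1 : (0:ℝ) ≤ 4 * Real.sqrt 2 := by positivity
  rw [abs_of_nonneg (by positivity)]
  exact mul_le_mul_of_nonneg_left (sech_pow_le y 4) h1

lemma tendsto_H5_atTop : Tendsto H5 atTop (𝓝 (Real.sqrt 2 * (3/2) * (π/2))) := by
  have h1 := tendsto_sinh_mul_sech_pow tendsto_sech_atTop 2
  have h2 := (tendsto_sinh_mul_sech_pow tendsto_sech_atTop 0).const_mul (3/2 : ℝ)
  have h3 := tendsto_arctan_sinh_atTop.const_mul (3/2 : ℝ)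
  have h := ((h1.add h2).add h3).const_mul (Real.sqrt 2)
  simp only [add_zero, zero_add, mul_zero] at h
  have h' : Tendsto H5 atTop (𝓝 (Real.sqrt 2 * (3/2 * (π/2)))) :=
    h.congr (fun y => by simp only [H5]; try ring)
  convert h' using 2
  try ring

lemma tendsto_H5_atBot : Tendsto H5 atBot (𝓝 (-(Real.sqrt 2 * (3/2) * (π/2)))) := by
  have h1 := tendsto_sinh_mul_sech_pow tendsto_sech_atBot 2
  have h2 := (tendsto_sinh_mul_sech_pow tendsto_sech_atBot 0).const_mul (3/2 : ℝ)
  have h3 := tendsto_arctan_sinh_atBot.const_mul (3/2 : ℝ)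
  have h := ((h1.add h2).add h3).const_mul (Real.sqrt 2)
  simp only [add_zero, zero_add, mul_zero] at h
  have h' : Tendsto H5 atBot (𝓝 (Real.sqrt 2 * (3/2 * (-(π/2))))) :=
    h.congr (fun y => by simp only [H5]; try ring)
  convert h' using 2
  try ring

lemma integral_w3_pow5 : ∫ y : ℝ, w3 y ^ 5 = 3 * π / Real.sqrt 2 := by
  have h := integral_of_hasDerivAt_of_tendsto hasDerivAt_H5 integrable_w3_pow5
    tendsto_H5_atBot tendsto_H5_atTop
  rw [h]
  have h2 : Real.sqrt 2 * Real.sqrt 2 = 2 := Real.mul_self_sqrt (by norm_num)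
  have hne : Real.sqrt 2 ≠ 0 := by positivity
  field_simp
  ring_nf
  nlinarith [h2, Real.pi_pos]

end W3Aux

/-- If `(L₀ - λ)ψ = w³` with `ψ` decaying, then `∫ w² ψ = (3π/√2)/(3 - λ)`. -/
theorem integral_w_sq_inverse (lam : ℝ) (hlam : lam ≠ 3) (ψ : ℝ → ℝ)
    (hψ : ContDiff ℝ 2 ψ)
    (hψ_bdd : ∃ C : ℝ, ∀ y : ℝ, |ψ y| ≤ C ∧ |deriv ψ y| ≤ C)
    (hψ_lim : Tendsto ψ (cocompact ℝ) (nhds 0))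
    (hψ'_lim : Tendsto (deriv ψ) (cocompact ℝ) (nhds 0))
    (heq : ∀ y : ℝ, deriv (deriv ψ) y - ψ y + 3 * (w3 y) ^ 2 * ψ y - lam * ψ y
        = (w3 y) ^ 3) :
    ∫ y : ℝ, (w3 y) ^ 2 * ψ y = (3 * Real.pi / Real.sqrt 2) / (3 - lam) := by
  classical
  obtain ⟨C, hC⟩ := hψ_bdd
  have hC0 : (0:ℝ) ≤ C := (abs_nonneg _).trans (hC 0).1
  have hψ1 : Differentiable ℝ ψ := hψ.differentiable (by norm_num)
  have hψ2 : Differentiable ℝ (deriv ψ) := by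
    have h : ContDiff ℝ ((1:ℕ∞)+1) ψ := by exact_mod_cast hψ
    exact ((contDiff_succ_iff_deriv).mp h).2.2.differentiable (by norm_num)
  have hcocB : (atBot : Filter ℝ) ≤ cocompact ℝ := by
    rw [cocompact_eq_atBot_atTop]; exact le_sup_left
  have hcocT : (atTop : Filter ℝ) ≤ cocompact ℝ := by
    rw [cocompact_eq_atBot_atTop]; exact le_sup_right
  have hψtop : Tendsto ψ atTop (𝓝 0) := hψ_lim.mono_left hcocT
  have hψbot : Tendsto ψ atBot (𝓝 0) := hψ_lim.mono_left hcocB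
  have hψ'top : Tendsto (deriv ψ) atTop (𝓝 0) := hψ'_lim.mono_left hcocT
  have hψ'bot : Tendsto (deriv ψ) atBot (𝓝 0) := hψ'_lim.mono_left hcocB
  set F : ℝ → ℝ := fun y => 2 * ((Real.cosh y)⁻¹)^2 * deriv ψ y
      + 4 * (Real.sinh y * ((Real.cosh y)⁻¹)^3) * ψ y with hFdef
  have hF : ∀ y, HasDerivAt F
      (w3 y ^ 5 + (lam - 3) * (w3 y ^ 2 * ψ y)) y := by
    intro y
    have hs := Real.hasDerivAt_sinh y
    have hc := W3Aux.hasDerivAt_sech y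
    have h2 := hc.pow 2
    have h3 := hc.pow 3
    have hp : HasDerivAt ψ (deriv ψ y) y := (hψ1 y).hasDerivAt
    have hp' : HasDerivAt (deriv ψ) (deriv (deriv ψ) y) y := (hψ2 y).hasDerivAt
    have HH := ((h2.const_mul 2).mul hp').add (((hs.mul h3).const_mul 4).mul hp)
    refine HH.congr_deriv (Eq.symm ?_)
    have hdd : deriv (deriv ψ) y
        = w3 y ^ 3 + ψ y + lam * ψ y - 3 * w3 y ^ 2 * ψ y := by
      have := heq y; linarith
    rw [hdd]
    have hcs : Real.sinh y ^ 2 = Real.cosh y ^ 2 - 1 := by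
      have := Real.cosh_sq y; linarith
    have hne := W3Aux.cosh_ne y
    have h2' := W3Aux.sqrt_two_sq
    simp only [w3]
    simp only [Pi.pow_apply, Pi.mul_apply]
    norm_num
    field_simp
    ring_nf
    linear_combination (12*Real.cosh y*ψ y) * hcs
      + (Real.sqrt 2^3 + Real.cosh y^3*lam*ψ y - 3*Real.cosh y^3*ψ y + 6*Real.cosh y*ψ y) * h2'
  have hFbound : ∀ y, ‖F y‖ ≤ 6 * C * (Real.cosh y)⁻¹ := by
    intro y
    have hcn := W3Aux.sech_nonneg y
    have hc1 := W3Aux.sech_le_one y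
    have hpow : ((Real.cosh y)⁻¹)^2 ≤ (Real.cosh y)⁻¹ := by
      simpa using W3Aux.sech_pow_le y 1
    have e1 : |2 * ((Real.cosh y)⁻¹)^2 * deriv ψ y| ≤ 2 * C * (Real.cosh y)⁻¹ := by
      rw [abs_mul, abs_mul, abs_two]
      have h1 : |((Real.cosh y)⁻¹)^2| = ((Real.cosh y)⁻¹)^2 := abs_of_nonneg (by positivity)
      rw [h1]
      have h2 := (hC y).2
      have := mul_le_mul hpow h2 (abs_nonneg _) hcn
      nlinarith
    have e2 : |4 * (Real.sinh y * ((Real.cosh y)⁻¹)^3) * ψ y| ≤ 4 * C * (Real.cosh y)⁻¹ := by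
      rw [abs_mul, abs_mul]
      have hb : |Real.sinh y * ((Real.cosh y)⁻¹)^3| ≤ (Real.cosh y)⁻¹ := by
        simpa using W3Aux.sinh_mul_sech_pow_le y 1
      have h2 := (hC y).1
      have h4 : |(4:ℝ)| = 4 := by norm_num
      rw [h4]
      have := mul_le_mul hb h2 (abs_nonneg _) hcn
      nlinarith
    calc ‖F y‖ ≤ |2 * ((Real.cosh y)⁻¹)^2 * deriv ψ y|
          + |4 * (Real.sinh y * ((Real.cosh y)⁻¹)^3) * ψ y| := by
          rw [hFdef]; exact abs_add_le _ _
      _ ≤ 6 * C * (Real.cosh y)⁻¹ := by linarith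
  have hFtop : Tendsto F atTop (𝓝 0) := by
    refine squeeze_zero_norm hFbound ?_
    have := W3Aux.tendsto_sech_atTop.const_mul (6*C)
    simpa using this
  have hFbot : Tendsto F atBot (𝓝 0) := by
    refine squeeze_zero_norm hFbound ?_
    have := W3Aux.tendsto_sech_atBot.const_mul (6*C)
    simpa using this
  have hIw2ψ : Integrable (fun y : ℝ => w3 y ^ 2 * ψ y) := by
    refine (W3Aux.integrable_sech.const_mul (2*C)).mono'
      (((W3Aux.continuous_w3.pow 2).mul hψ1.continuous).aestronglyMeasurable)
      (ae_of_all _ fun y => ?_)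
    rw [Real.norm_eq_abs, abs_mul, W3Aux.w3_sq]
    have hcn := W3Aux.sech_nonneg y
    have := (hC y).1
    have h1 : |2 * ((Real.cosh y)⁻¹)^2| = 2 * ((Real.cosh y)⁻¹)^2 := abs_of_nonneg (by positivity)
    rw [h1]
    have hpow : ((Real.cosh y)⁻¹)^2 ≤ (Real.cosh y)⁻¹ := by
      simpa using W3Aux.sech_pow_le y 1
    have := mul_le_mul hpow (hC y).1 (abs_nonneg _) hcn
    nlinarith
  have hG_int : Integrable (fun y : ℝ => w3 y ^ 5 + (lam - 3) * (w3 y ^ 2 * ψ y)) :=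
    W3Aux.integrable_w3_pow5.add (hIw2ψ.const_mul _)
  have hzero : ∫ y : ℝ, (w3 y ^ 5 + (lam - 3) * (w3 y ^ 2 * ψ y)) = 0 := by
    have h := integral_of_hasDerivAt_of_tendsto hF hG_int hFbot hFtop
    simpa using h
  rw [integral_add W3Aux.integrable_w3_pow5 (hIw2ψ.const_mul _),
    integral_const_mul, W3Aux.integral_w3_pow5] at hzero
  have h3 : (3:ℝ) - lam ≠ 0 := sub_ne_zero.mpr (Ne.symm hlam)
  rw [eq_div_iff h3]
  linear_combination -hzero
end

section
/- Let w(y) = √2 · sech(y) and let λ ∈ ℝ with λ ≠ 3. Suppose ψ : ℝ → ℝ is twice continuously differentiable, ψ and ψ' are bounded and tend to 0 as |y| → ∞, and ψ satisfies (L₀ − λ)ψ = w³. Then for the exponent set (p,q,m,s) = (3,1,3,0), the multiplier F(λ) ≡ m·q·(∫_ℝ w(y)^{m−1}·ψ(y) dy)/(∫_ℝ w(y)^m dy) = 3·(∫_ℝ w²ψ dy)/(∫_ℝ w³ dy) equals 9/(2(3 − λ)). -/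
open MeasureTheory Real Filter

section Helpers

lemma integrable_exp_neg_abs' : Integrable (fun x : ℝ => Real.exp (-|x|)) := by
  rw [← integrableOn_univ, ← Set.Iic_union_Ioi (a := (0:ℝ)), integrableOn_union]
  constructor
  · refine (integrableOn_exp_Iic 0).congr_fun (fun x hx => ?_) measurableSet_Iic
    simp at hx
    rw [abs_of_nonpos hx, neg_neg]
  · refine ((exp_neg_integrableOn_Ioi 0 one_pos).congr_fun (fun x hx => ?_) measurableSet_Ioi)
    simp at hx
    rw [abs_of_pos hx]; norm_num

lemma integrable_of_exp_bound {f : ℝ → ℝ} (hf : Continuous f) {C : ℝ}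
    (h : ∀ y, |f y| ≤ C * Real.exp (-|y|)) : Integrable f :=
  (integrable_exp_neg_abs'.const_mul C).mono' hf.aestronglyMeasurable
    (Filter.Eventually.of_forall fun y => by
      simpa [Real.norm_eq_abs] using h y)

lemma exp_abs_le_two_cosh (y : ℝ) : Real.exp |y| ≤ 2 * Real.cosh y := by
  rw [Real.cosh_eq]
  rcases abs_cases y with ⟨h, _⟩ | ⟨h, _⟩ <;> rw [h] <;>
    [have := (Real.exp_pos (-y)).le; have := (Real.exp_pos y).le] <;> linarith

lemma sech_le_exp (y : ℝ) : 1 / Real.cosh y ≤ 2 * Real.exp (-|y|) := by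
  rw [div_le_iff₀ (Real.cosh_pos y)]
  have h := exp_abs_le_two_cosh y
  have := mul_le_mul_of_nonneg_left h (Real.exp_pos (-|y|)).le
  rw [← Real.exp_add, neg_add_cancel, Real.exp_zero] at this
  linarith

lemma sech_pow_le (y : ℝ) {k : ℕ} (hk : k ≠ 0) :
    (1 / Real.cosh y) ^ k ≤ 2 * Real.exp (-|y|) := by
  refine le_trans (pow_le_of_le_one (by positivity) ?_ hk) (sech_le_exp y)
  rw [div_le_one (Real.cosh_pos y)]
  exact Real.one_le_cosh y

lemma continuous_sech : Continuous fun y : ℝ => 1 / Real.cosh y :=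
  continuous_const.div Real.continuous_cosh fun y => (Real.cosh_pos y).ne'

lemma integrable_sech_pow (a : ℝ) {k : ℕ} (hk : k ≠ 0) :
    Integrable (fun y : ℝ => a * (1 / Real.cosh y) ^ k) := by
  refine integrable_of_exp_bound (continuous_const.mul (continuous_sech.pow k)) (C := |a| * 2) fun y => ?_
  rw [abs_mul, abs_pow, abs_of_pos (by positivity : (0:ℝ) < 1 / Real.cosh y), mul_assoc]
  exact mul_le_mul_of_nonneg_left (sech_pow_le y hk) (abs_nonneg a)

lemma integrable_sech_pow_mul {f : ℝ → ℝ} (hf : Continuous f) {C : ℝ}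
    (hC : ∀ y, |f y| ≤ C) (a : ℝ) {k : ℕ} (hk : k ≠ 0) :
    Integrable (fun y : ℝ => a * (1 / Real.cosh y) ^ k * f y) := by
  have hC0 : 0 ≤ C := (abs_nonneg _).trans (hC 0)
  refine integrable_of_exp_bound ((continuous_const.mul (continuous_sech.pow k)).mul hf) (C := |a| * C * 2) fun y => ?_
  have h1 : (0:ℝ) < 1 / Real.cosh y := by positivity
  rw [abs_mul, abs_mul, abs_pow, abs_of_pos h1]
  calc |a| * (1 / Real.cosh y) ^ k * |f y|
      ≤ |a| * (1 / Real.cosh y) ^ k * C := by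
        exact mul_le_mul_of_nonneg_left (hC y) (by positivity)
    _ ≤ |a| * (2 * Real.exp (-|y|)) * C := by
        refine mul_le_mul_of_nonneg_right ?_ hC0
        exact mul_le_mul_of_nonneg_left (sech_pow_le y hk) (abs_nonneg a)
    _ = |a| * C * 2 * Real.exp (-|y|) := by ring

lemma hasDerivAt_g (y : ℝ) :
    HasDerivAt (fun y : ℝ => 2 / Real.cosh y ^ 2) (-4 * Real.sinh y / Real.cosh y ^ 3) y := by
  have h : HasDerivAt (fun y : ℝ => 2 / Real.cosh y ^ 2)
      ((0 * Real.cosh y ^ 2 - 2 * (2 * Real.cosh y ^ 1 * Real.sinh y)) / (Real.cosh y ^ 2) ^ 2) y :=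
    (hasDerivAt_const y 2).div ((Real.hasDerivAt_cosh y).pow 2) (by positivity)
  convert h using 1
  have hc := (Real.cosh_pos y).ne'
  field_simp
  ring

lemma hasDerivAt_gd (y : ℝ) :
    HasDerivAt (fun y : ℝ => -4 * Real.sinh y / Real.cosh y ^ 3)
      (8 / Real.cosh y ^ 2 - 12 / Real.cosh y ^ 4) y := by
  have h : HasDerivAt (fun y : ℝ => -4 * Real.sinh y / Real.cosh y ^ 3)
      (((-4 * Real.cosh y) * Real.cosh y ^ 3 -
        (-4 * Real.sinh y) * (3 * Real.cosh y ^ 2 * Real.sinh y)) / (Real.cosh y ^ 3) ^ 2) y :=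
    (((Real.hasDerivAt_sinh y).const_mul (-4)).div ((Real.hasDerivAt_cosh y).pow 3) (by positivity))
  convert h using 1
  have hc := (Real.cosh_pos y).ne'
  have hs : Real.sinh y ^ 2 = Real.cosh y ^ 2 - 1 := by
    have := Real.cosh_sq_sub_sinh_sq y; linarith
  field_simp
  ring_nf
  rw [hs]
  ring

lemma hasDerivAt_st (y : ℝ) :
    HasDerivAt (fun y : ℝ => Real.sinh y / Real.cosh y ^ 4)
      (4 * (1 / Real.cosh y) ^ 5 - 3 * (1 / Real.cosh y) ^ 3) y := by
  have h : HasDerivAt (fun y : ℝ => Real.sinh y / Real.cosh y ^ 4)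
      ((Real.cosh y * Real.cosh y ^ 4 -
        Real.sinh y * (4 * Real.cosh y ^ 3 * Real.sinh y)) / (Real.cosh y ^ 4) ^ 2) y :=
    ((Real.hasDerivAt_sinh y).div ((Real.hasDerivAt_cosh y).pow 4) (by positivity))
  convert h using 1
  have hc := (Real.cosh_pos y).ne'
  have hs : Real.sinh y ^ 2 = Real.cosh y ^ 2 - 1 := by
    have := Real.cosh_sq_sub_sinh_sq y; linarith
  field_simp
  ring_nf
  rw [hs]
  ring

lemma tendsto_cosh_atTop' : Tendsto Real.cosh atTop atTop := by
  apply tendsto_atTop_mono (fun y => ?_) (Real.tendsto_exp_atTop.atTop_div_const two_pos)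
  rw [Real.cosh_eq]
  have := (Real.exp_pos (-y)).le
  linarith

lemma tendsto_cosh_atBot' : Tendsto Real.cosh atBot atTop := by
  have h : Tendsto (fun y : ℝ => Real.exp (-y) / 2) atBot atTop :=
    ((Real.tendsto_exp_atTop.comp tendsto_neg_atBot_atTop).atTop_div_const two_pos)
  apply tendsto_atTop_mono (fun y => ?_) h
  rw [Real.cosh_eq]
  have := (Real.exp_pos y).le
  linarith

lemma abs_sinh_le_cosh (y : ℝ) : |Real.sinh y| ≤ Real.cosh y := by
  rw [Real.sinh_eq, Real.cosh_eq, abs_le]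
  constructor <;> nlinarith [(Real.exp_pos y).le, (Real.exp_pos (-y)).le]

lemma st_bound (y : ℝ) : ‖Real.sinh y / Real.cosh y ^ 4‖ ≤ (Real.cosh y)⁻¹ := by
  have hcp := Real.cosh_pos y
  have hc1 := Real.one_le_cosh y
  rw [Real.norm_eq_abs, abs_div, abs_of_pos (by positivity : (0:ℝ) < Real.cosh y ^ 4),
    div_le_iff₀ (by positivity)]
  calc |Real.sinh y| ≤ Real.cosh y := abs_sinh_le_cosh y
    _ ≤ Real.cosh y ^ 3 := by nlinarith [mul_le_mul_of_nonneg_left (by nlinarith : (1:ℝ) ≤ Real.cosh y ^ 2) hcp.le]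
    _ = (Real.cosh y)⁻¹ * Real.cosh y ^ 4 := by field_simp

end Helpers

/-- For the explicitly solvable exponent set `(p,q,m,s) = (3,1,3,0)`, the multiplier
`F(λ) = 3 (∫ w² ψ)/(∫ w³)` equals `9/(2(3-λ))`, where `(L₀ - λ)ψ = w³`. -/
theorem F_lambda_explicit (lam : ℝ) (hlam : lam ≠ 3) (ψ : ℝ → ℝ)
    (hψ : ContDiff ℝ 2 ψ)
    (hψ_bdd : ∃ C : ℝ, ∀ y : ℝ, |ψ y| ≤ C ∧ |deriv ψ y| ≤ C)
    (hψ_lim : Tendsto ψ (cocompact ℝ) (nhds 0))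
    (hψ'_lim : Tendsto (deriv ψ) (cocompact ℝ) (nhds 0))
    (heq : ∀ y : ℝ, deriv (deriv ψ) y - ψ y + 3 * (w3 y) ^ 2 * ψ y - lam * ψ y
        = (w3 y) ^ 3) :
    3 * (∫ y : ℝ, (w3 y) ^ 2 * ψ y) / (∫ y : ℝ, (w3 y) ^ 3)
      = 9 / (2 * (3 - lam)) := by
  obtain ⟨C, hC⟩ := hψ_bdd
  have hC0 : 0 ≤ C := (abs_nonneg _).trans (hC 0).1
  have hψc : Continuous ψ := hψ.continuous
  have hs2 : Real.sqrt 2 ^ 2 = 2 := Real.sq_sqrt (by norm_num)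
  have hs2pos : 0 < Real.sqrt 2 := Real.sqrt_pos.mpr (by norm_num)
  -- w3 power identities
  have hw2 : ∀ y, w3 y ^ 2 = 2 * (1 / Real.cosh y) ^ 2 := by
    intro y; rw [w3, div_pow, hs2]; ring
  have hw3 : ∀ y, w3 y ^ 3 = (2 * Real.sqrt 2) * (1 / Real.cosh y) ^ 3 := by
    intro y; rw [w3, div_pow, show Real.sqrt 2 ^ 3 = 2 * Real.sqrt 2 by
      rw [pow_succ, hs2]]; ring
  have hw4 : ∀ y, w3 y ^ 4 = 4 * (1 / Real.cosh y) ^ 4 := by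
    intro y; rw [w3, div_pow, show Real.sqrt 2 ^ 4 = 4 by
      rw [show (4:ℕ) = 2*2 from rfl, pow_mul, hs2]; norm_num]; ring
  have hw5 : ∀ y, w3 y ^ 5 = (4 * Real.sqrt 2) * (1 / Real.cosh y) ^ 5 := by
    intro y; rw [w3, div_pow, show Real.sqrt 2 ^ 5 = 4 * Real.sqrt 2 by
      rw [show (5:ℕ) = 2*2+1 from rfl, pow_succ, pow_mul, hs2]; norm_num]; ring
  -- differentiability of ψ
  have hdiff : Differentiable ℝ ψ := hψ.differentiable (by norm_num)
  have hd1 : ∀ y, HasDerivAt ψ (deriv ψ y) y := fun y => (hdiff y).hasDerivAt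
  have hψ1 : ContDiff ℝ 1 (deriv ψ) := by
    have h := (contDiff_succ_iff_deriv (n := 1)).mp (by exact_mod_cast hψ)
    exact h.2.2
  have hd2 : ∀ y, HasDerivAt (deriv ψ) (deriv (deriv ψ) y) y :=
    fun y => ((hψ1.differentiable one_ne_zero) y).hasDerivAt
  -- integrability facts
  have int_s3 : Integrable (fun y : ℝ => (1 / Real.cosh y) ^ 3) := by
    simpa using integrable_sech_pow 1 (k := 3) (by norm_num)
  have int_s5 : Integrable (fun y : ℝ => (1 / Real.cosh y) ^ 5) := by
    simpa using integrable_sech_pow 1 (k := 5) (by norm_num)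
  have int_w2ψ : Integrable (fun y : ℝ => w3 y ^ 2 * ψ y) := by
    have : (fun y : ℝ => w3 y ^ 2 * ψ y)
        = fun y : ℝ => 2 * (1 / Real.cosh y) ^ 2 * ψ y := by
      funext y; rw [hw2]
    rw [this]
    exact integrable_sech_pow_mul hψc (fun y => (hC y).1) 2 (by norm_num)
  have int_w5 : Integrable (fun y : ℝ => w3 y ^ 5) := by
    have : (fun y : ℝ => w3 y ^ 5)
        = fun y : ℝ => (4 * Real.sqrt 2) * (1 / Real.cosh y) ^ 5 := by
      funext y; rw [hw5]
    rw [this]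
    exact integrable_sech_pow _ (by norm_num)
  have int_w3 : Integrable (fun y : ℝ => w3 y ^ 3) := by
    have : (fun y : ℝ => w3 y ^ 3)
        = fun y : ℝ => (2 * Real.sqrt 2) * (1 / Real.cosh y) ^ 3 := by
      funext y; rw [hw3]
    rw [this]
    exact integrable_sech_pow _ (by norm_num)
  -- pointwise identity for the derivative of the IBP function
  have key : ∀ y, (-4 * Real.sinh y / Real.cosh y ^ 3 * deriv ψ y
        + 2 / Real.cosh y ^ 2 * deriv (deriv ψ) y)
      - ((8 / Real.cosh y ^ 2 - 12 / Real.cosh y ^ 4) * ψ y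
        + -4 * Real.sinh y / Real.cosh y ^ 3 * deriv ψ y)
      = (lam - 3) * (w3 y ^ 2 * ψ y) + w3 y ^ 5 := by
    intro y
    have h := heq y
    rw [hw2 y, hw3 y] at h
    rw [hw2 y, hw5 y]
    have hc := (Real.cosh_pos y).ne'
    linear_combination (2 * (1 / Real.cosh y) ^ 2) * h
  -- main integration by parts
  have hder : ∀ y, HasDerivAt
      (fun y => 2 / Real.cosh y ^ 2 * deriv ψ y - -4 * Real.sinh y / Real.cosh y ^ 3 * ψ y)
      ((lam - 3) * (w3 y ^ 2 * ψ y) + w3 y ^ 5) y := by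
    intro y
    have h := ((hasDerivAt_g y).mul (hd2 y)).sub ((hasDerivAt_gd y).mul (hd1 y))
    rw [← key y]
    exact h
  have hint : Integrable (fun y : ℝ => (lam - 3) * (w3 y ^ 2 * ψ y) + w3 y ^ 5) :=
    (int_w2ψ.const_mul (lam - 3)).add int_w5
  -- decay of the boundary function
  have hb : ∀ y : ℝ, ‖2 / Real.cosh y ^ 2 * deriv ψ y
      - -4 * Real.sinh y / Real.cosh y ^ 3 * ψ y‖ ≤ 6 * C / Real.cosh y ^ 2 := by
    intro y
    have hcp := Real.cosh_pos y
    have hc1 := Real.one_le_cosh y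
    rw [Real.norm_eq_abs]
    have e1 : |2 / Real.cosh y ^ 2 * deriv ψ y| ≤ 2 * C / Real.cosh y ^ 2 := by
      rw [abs_mul, abs_of_pos (by positivity : (0:ℝ) < 2 / Real.cosh y ^ 2)]
      rw [div_mul_eq_mul_div, mul_comm (2:ℝ) C, mul_div_assoc, mul_comm C _, ← mul_div_assoc]
      exact div_le_div_of_nonneg_right (mul_le_mul_of_nonneg_left (hC y).2 two_pos.le)
        (by positivity) |>.trans_eq (by ring)
    have e2 : |-4 * Real.sinh y / Real.cosh y ^ 3 * ψ y| ≤ 4 * C / Real.cosh y ^ 2 := by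
      rw [abs_mul, abs_div, abs_mul, abs_of_pos (by positivity : (0:ℝ) < Real.cosh y ^ 3)]
      have h1 : |(-4:ℝ)| * |Real.sinh y| ≤ 4 * Real.cosh y := by
        rw [abs_neg, abs_of_pos (by norm_num : (0:ℝ) < (4:ℝ))]
        exact mul_le_mul_of_nonneg_left (abs_sinh_le_cosh y) (by norm_num)
      calc |(-4:ℝ)| * |Real.sinh y| / Real.cosh y ^ 3 * |ψ y|
          ≤ 4 * Real.cosh y / Real.cosh y ^ 3 * C := by
            apply mul_le_mul (div_le_div_of_nonneg_right h1 (by positivity)) (hC y).1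
              (abs_nonneg _) (by positivity)
        _ = 4 * C / Real.cosh y ^ 2 := by field_simp
    calc |2 / Real.cosh y ^ 2 * deriv ψ y - -4 * Real.sinh y / Real.cosh y ^ 3 * ψ y|
        ≤ |2 / Real.cosh y ^ 2 * deriv ψ y| + |-4 * Real.sinh y / Real.cosh y ^ 3 * ψ y| :=
          abs_sub _ _
      _ ≤ 2 * C / Real.cosh y ^ 2 + 4 * C / Real.cosh y ^ 2 := add_le_add e1 e2
      _ = 6 * C / Real.cosh y ^ 2 := by ring
  have hbound_eq : (fun y : ℝ => 6 * C / Real.cosh y ^ 2)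
      = fun y : ℝ => 6 * C * ((Real.cosh y)⁻¹ * (Real.cosh y)⁻¹) := by
    funext y; rw [pow_two, div_eq_mul_inv, mul_inv]
  have htend_bound_top : Tendsto (fun y : ℝ => 6 * C / Real.cosh y ^ 2) atTop (nhds 0) := by
    rw [hbound_eq]
    have := (tendsto_cosh_atTop'.inv_tendsto_atTop.mul
      tendsto_cosh_atTop'.inv_tendsto_atTop).const_mul (6 * C)
    simpa using this
  have htend_bound_bot : Tendsto (fun y : ℝ => 6 * C / Real.cosh y ^ 2) atBot (nhds 0) := by
    rw [hbound_eq]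
    have := (tendsto_cosh_atBot'.inv_tendsto_atTop.mul
      tendsto_cosh_atBot'.inv_tendsto_atTop).const_mul (6 * C)
    simpa using this
  have htop : Tendsto
      (fun y => 2 / Real.cosh y ^ 2 * deriv ψ y - -4 * Real.sinh y / Real.cosh y ^ 3 * ψ y)
      atTop (nhds 0) := squeeze_zero_norm hb htend_bound_top
  have hbot : Tendsto
      (fun y => 2 / Real.cosh y ^ 2 * deriv ψ y - -4 * Real.sinh y / Real.cosh y ^ 3 * ψ y)
      atBot (nhds 0) := squeeze_zero_norm hb htend_bound_bot
  have hibp : (∫ y : ℝ, ((lam - 3) * (w3 y ^ 2 * ψ y) + w3 y ^ 5)) = 0 - 0 :=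
    integral_of_hasDerivAt_of_tendsto hder hint hbot htop
  rw [integral_add (int_w2ψ.const_mul (lam - 3)) int_w5, integral_const_mul, sub_zero] at hibp
  -- second integration by parts: 4 ∫ s⁵ = 3 ∫ s³
  have hst_top : Tendsto (fun y : ℝ => Real.sinh y / Real.cosh y ^ 4) atTop (nhds 0) :=
    squeeze_zero_norm st_bound tendsto_cosh_atTop'.inv_tendsto_atTop
  have hst_bot : Tendsto (fun y : ℝ => Real.sinh y / Real.cosh y ^ 4) atBot (nhds 0) :=
    squeeze_zero_norm st_bound tendsto_cosh_atBot'.inv_tendsto_atTop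
  have h2 : (∫ y : ℝ, (4 * (1 / Real.cosh y) ^ 5 - 3 * (1 / Real.cosh y) ^ 3)) = 0 - 0 :=
    integral_of_hasDerivAt_of_tendsto hasDerivAt_st
      ((int_s5.const_mul 4).sub (int_s3.const_mul 3)) hst_bot hst_top
  rw [integral_sub (int_s5.const_mul 4) (int_s3.const_mul 3), integral_const_mul,
    integral_const_mul, sub_zero, sub_eq_zero] at h2
  -- positivity of ∫ s³
  have hS3pos : 0 < ∫ y : ℝ, (1 / Real.cosh y) ^ 3 := by
    rw [integral_pos_iff_support_of_nonneg (fun y => by positivity) int_s3]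
    have : Function.support (fun y : ℝ => (1 / Real.cosh y) ^ 3) = Set.univ :=
      Set.eq_univ_iff_forall.mpr fun y => Function.mem_support.mpr (by positivity)
    rw [this]
    exact Measure.measure_univ_pos.mpr (NeZero.ne _)
  -- assemble
  set S3 := ∫ y : ℝ, (1 / Real.cosh y) ^ 3 with hS3def
  set S5 := ∫ y : ℝ, (1 / Real.cosh y) ^ 5 with hS5def
  have hJ3 : (∫ y : ℝ, w3 y ^ 3) = 2 * Real.sqrt 2 * S3 := by
    rw [show (fun y : ℝ => w3 y ^ 3) = fun y : ℝ => (2 * Real.sqrt 2) * (1 / Real.cosh y) ^ 3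
      from funext fun y => hw3 y]
    exact integral_const_mul _ _
  have hJ5 : (∫ y : ℝ, w3 y ^ 5) = 4 * Real.sqrt 2 * S5 := by
    rw [show (fun y : ℝ => w3 y ^ 5) = fun y : ℝ => (4 * Real.sqrt 2) * (1 / Real.cosh y) ^ 5
      from funext fun y => hw5 y]
    exact integral_const_mul _ _
  have hlam' : lam - 3 ≠ 0 := sub_ne_zero.mpr hlam
  have hS3ne : S3 ≠ 0 := hS3pos.ne'
  have hI2 : (∫ y : ℝ, w3 y ^ 2 * ψ y) = (4 * Real.sqrt 2 * S5) / (3 - lam) := by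
    rw [← hJ5, eq_div_iff (by intro h; exact hlam (by linarith) : (3:ℝ) - lam ≠ 0)]
    linear_combination (-1 : ℝ) * hibp
  rw [hI2, hJ3]
  have hlam'' : (3:ℝ) - lam ≠ 0 := fun h => hlam (by linarith [sub_eq_zero.mp h])
  field_simp
  -- 4 S5 = 3 S3 from h2
  linear_combination 3 * h2
end
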